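/- The number of parking functions on {1,...,n} equals (n+1)^(n-1). -/

import Mathlib

open Finset

/-- `f : Fin n → Fin n` (thought of as a function `{1,…,n} → {1,…,n}`) is a parking
function if for every `k ≤ n` the preimage of `{1,…,k}` has at least `k` elements. -/
def IsParkingFunction (n : ℕ) (f : Fin n → Fin n) : Prop :=
  ∀ k ≤ n, k ≤ (Finset.univ.filter (fun x => (f x : ℕ) < k)).card

namespace ParkAux

variable {n : ℕ}

/-- circular shifted-parking condition -/
def good (n : ℕ) (g : Fin n → ZMod (n+1)) (t : ZMod (n+1)) : Prop :=
  ∀ k ≤ n, k ≤ (Finset.univ.filter (fun x => ∃ j < k, g x = t + (j : ZMod (n+1)))).card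

instance (g : Fin n → ZMod (n+1)) (t : ZMod (n+1)) : Decidable (good n g t) := by
  unfold good; infer_instance

def cnt (n : ℕ) (g : Fin n → ZMod (n+1)) (i : ZMod (n+1)) : ℕ :=
  (Finset.univ.filter (fun x => g x = i)).card

lemma cast_bij : Function.Bijective (fun j : Fin (n+1) => ((j : ℕ) : ZMod (n+1))) := by
  constructor
  · intro a b hab
    have h2 : ((a : ℕ) : ZMod (n+1)).val = ((b : ℕ) : ZMod (n+1)).val := congrArg ZMod.val hab
    rwa [ZMod.val_cast_of_lt a.isLt, ZMod.val_cast_of_lt b.isLt, Fin.val_inj] at h2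
  · intro i
    exact ⟨⟨i.val, i.val_lt⟩, by simp [ZMod.natCast_val, ZMod.cast_id]⟩

lemma sum_cnt (g : Fin n → ZMod (n+1)) : ∑ i : ZMod (n+1), cnt n g i = n := by
  have h := Finset.card_eq_sum_card_fiberwise (f := g) (s := (Finset.univ : Finset (Fin n)))
    (t := Finset.univ) (fun x _ => Finset.mem_univ _)
  simpa [cnt, Finset.card_univ] using h.symm

lemma sum_shift {M : Type*} [AddCommMonoid M] (c : ZMod (n+1) → M) (u : ZMod (n+1)) :
    ∑ j ∈ Finset.range (n+1), c (u + (j : ℕ)) = ∑ i : ZMod (n+1), c i := by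
  rw [← Fin.sum_univ_eq_sum_range (fun j => c (u + (j : ℕ))) (n+1)]
  have := Fintype.sum_bijective _ cast_bij (fun j : Fin (n+1) => c (u + ((j : ℕ) : ZMod (n+1))))
      (fun i => c (u + i)) (fun j => rfl)
  rw [this]
  exact Fintype.sum_bijective _ (Equiv.addLeft u).bijective _ _ (fun i => rfl)

lemma filter_card (g : Fin n → ZMod (n+1)) (t : ZMod (n+1)) (k : ℕ) (hk : k ≤ n + 1) :
    (Finset.univ.filter (fun x => ∃ j < k, g x = t + (j : ZMod (n+1)))).card
      = ∑ j ∈ Finset.range k, cnt n g (t + (j : ℕ)) := by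
  have hset : (Finset.univ.filter (fun x => ∃ j < k, g x = t + (j : ZMod (n+1))))
      = (Finset.range k).biUnion
          (fun j => Finset.univ.filter (fun x => g x = t + (j : ZMod (n+1)))) := by
    ext x
    simp [Finset.mem_biUnion]
  rw [hset, Finset.card_biUnion]
  · rfl
  intro j₁ h1 j₂ h2 hne
  rw [Finset.mem_coe, Finset.mem_range] at h1 h2
  apply Finset.disjoint_left.2
  intro x hx1 hx2
  simp only [Finset.mem_filter] at hx1 hx2
  apply hne
  have hcast : (j₁ : ZMod (n+1)) = (j₂ : ZMod (n+1)) :=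
    add_left_cancel (hx1.2.symm.trans hx2.2)
  have := congrArg ZMod.val hcast
  rwa [ZMod.val_cast_of_lt (by omega), ZMod.val_cast_of_lt (by omega)] at this

/-- cumulative defect function -/
def G (n : ℕ) (c : ZMod (n+1) → ℕ) (u : ℕ) : ℤ :=
  (∑ j ∈ Finset.range u, (c ((j : ℕ) : ZMod (n+1)) : ℤ)) - u

lemma G_add (c : ZMod (n+1) → ℕ) (u k : ℕ) :
    G n c (u + k) = G n c u + (∑ j ∈ Finset.range k, (c (((u : ZMod (n+1))) + (j : ℕ)) : ℤ)) - k := by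
  unfold G
  rw [Finset.sum_range_add]
  have h2 : ∀ j : ℕ, ((u + j : ℕ) : ZMod (n+1)) = (u : ZMod (n+1)) + (j : ℕ) := by
    intro j; push_cast; ring
  simp_rw [h2]
  push_cast
  ring

lemma G_period (c : ZMod (n+1) → ℕ) (hsum : ∑ i : ZMod (n+1), c i = n) (u : ℕ) :
    G n c (u + (n+1)) = G n c u - 1 := by
  rw [G_add, sum_shift (fun i => (c i : ℤ))]
  have : ∑ i : ZMod (n+1), (c i : ℤ) = n := by push_cast [← hsum]; rfl
  rw [this]
  push_cast
  ring

lemma G_le_iff (c : ZMod (n+1) → ℕ) (u k : ℕ) :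
    G n c u ≤ G n c (u + k) ↔
      (k : ℤ) ≤ ∑ j ∈ Finset.range k, (c (((u : ZMod (n+1))) + (j : ℕ)) : ℤ) := by
  rw [G_add]
  constructor <;> intro h <;> linarith

/-- Cycle lemma, existence: the first argmin of `G` on `[0, n+1)` works. -/
lemma cycle_exists (c : ZMod (n+1) → ℕ) (hsum : ∑ i : ZMod (n+1), c i = n) :
    ∃ t < n + 1, ∀ k ≤ n, G n c t ≤ G n c (t + k) := by
  have hex : ∃ u, ∀ v ∈ Finset.range (n+1), G n c u ≤ G n c v := by
    obtain ⟨u, hu, hmin⟩ := Finset.exists_min_image (Finset.range (n+1)) (G n c)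
      ⟨0, Finset.mem_range.2 (Nat.succ_pos n)⟩
    exact ⟨u, hmin⟩
  set t := Nat.find hex with htdef
  have htmin : ∀ v ∈ Finset.range (n+1), G n c t ≤ G n c v := Nat.find_spec hex
  have htlt : t < n + 1 := by
    obtain ⟨u, hu, hmin⟩ := Finset.exists_min_image (Finset.range (n+1)) (G n c)
      ⟨0, Finset.mem_range.2 (Nat.succ_pos n)⟩
    exact lt_of_le_of_lt (Nat.find_le hmin) (Finset.mem_range.1 hu)
  refine ⟨t, htlt, ?_⟩
  intro k hk
  rcases lt_or_ge (t + k) (n+1) with hlt | hge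
  · exact htmin _ (Finset.mem_range.2 hlt)
  · set r := t + k - (n+1) with hr
    have hrt : r < t := by omega
    have htk : t + k = r + (n+1) := by omega
    have hrbad : ¬ (∀ v ∈ Finset.range (n+1), G n c r ≤ G n c v) := Nat.find_min hex hrt
    push_neg at hrbad
    obtain ⟨v, hv, hvlt⟩ := hrbad
    have h1 : G n c t ≤ G n c v := htmin v hv
    have h2 : G n c t + 1 ≤ G n c r := by omega
    rw [htk, G_period c hsum r]
    omega

lemma cycle_unique (c : ZMod (n+1) → ℕ) (hsum : ∑ i : ZMod (n+1), c i = n)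
    {t t' : ℕ} (ht : t < n + 1) (ht' : t' < n + 1)
    (hg : ∀ k ≤ n, G n c t ≤ G n c (t + k)) (hg' : ∀ k ≤ n, G n c t' ≤ G n c (t' + k)) :
    t = t' := by
  have key : ∀ a b : ℕ, a < n + 1 → b < n + 1 → a < b →
      (∀ k ≤ n, G n c a ≤ G n c (a + k)) → (∀ k ≤ n, G n c b ≤ G n c (b + k)) → False := by
    intro a b ha hb hab hga hgb
    have h1 : G n c a ≤ G n c b := by
      have := hga (b - a) (by omega)
      rwa [Nat.add_sub_cancel' (le_of_lt hab)] at this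
    have h2 : G n c b ≤ G n c (a + (n+1)) := by
      have := hgb (a + (n+1) - b) (by omega)
      rwa [Nat.add_sub_cancel' (by omega)] at this
    rw [G_period c hsum a] at h2
    omega
  rcases lt_trichotomy t t' with h | h | h
  · exact absurd (key t t' ht ht' h hg hg') (fun x => x)
  · exact h
  · exact absurd (key t' t ht' ht h hg' hg) (fun x => x)

/-- `good` restated via `G`. -/
lemma good_iff (g : Fin n → ZMod (n+1)) (t : ZMod (n+1)) :
    good n g t ↔ ∀ k ≤ n, G n (cnt n g) t.val ≤ G n (cnt n g) (t.val + k) := by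
  have htv : ((t.val : ℕ) : ZMod (n+1)) = t := ZMod.natCast_rightInverse t
  unfold good
  apply forall_congr'
  intro k
  apply imp_congr_right
  intro hk
  rw [filter_card g t k (le_trans hk (Nat.le_succ n)), G_le_iff, htv]
  rw [← Nat.cast_sum]
  exact Nat.cast_le.symm

lemma exists_unique_good (g : Fin n → ZMod (n+1)) : ∃! t : ZMod (n+1), good n g t := by
  obtain ⟨t, ht, hgood⟩ := cycle_exists (cnt n g) (sum_cnt g)
  refine ⟨(t : ZMod (n+1)), ?_, ?_⟩
  · show good n g (t : ZMod (n+1))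
    rw [good_iff]
    rwa [ZMod.val_cast_of_lt ht]
  · intro t' ht'
    rw [good_iff] at ht'
    have heq : t'.val = t :=
      cycle_unique (cnt n g) (sum_cnt g) (ZMod.val_lt t') ht ht' hgood
    rw [← heq]
    exact (ZMod.natCast_rightInverse t').symm

lemma good_shift (g : Fin n → ZMod (n+1)) (t s : ZMod (n+1)) (h : good n g t) :
    good n (fun x => g x + s) (t + s) := by
  intro k hk
  refine le_trans (h k hk) (le_of_eq (congrArg Finset.card ?_))
  ext x
  simp only [Finset.mem_filter, Finset.mem_univ, true_and]
  constructor
  · rintro ⟨j, hj, hx⟩; exact ⟨j, hj, by rw [hx]; ring⟩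
  · rintro ⟨j, hj, hx⟩
    refine ⟨j, hj, ?_⟩
    apply add_right_cancel (b := s)
    rw [hx]; ring

lemma good_filter_eq (g : Fin n → ZMod (n+1)) (k : ℕ) (hk : k ≤ n) :
    (Finset.univ.filter (fun x => ∃ j < k, g x = 0 + (j : ZMod (n+1))))
      = (Finset.univ.filter (fun x => (g x).val < k)) := by
  ext x
  simp only [Finset.mem_filter, Finset.mem_univ, true_and, zero_add]
  constructor
  · rintro ⟨j, hj, hjx⟩
    rw [hjx, ZMod.val_cast_of_lt (by omega)]
    exact hj
  · intro h
    exact ⟨(g x).val, h, (ZMod.natCast_rightInverse (g x)).symm⟩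

lemma good_zero_val_lt {g : Fin n → ZMod (n+1)} (hg : good n g 0) (x : Fin n) :
    (g x).val < n := by
  have h := hg n le_rfl
  rw [good_filter_eq g n le_rfl] at h
  have hu : (Finset.univ.filter (fun x => (g x).val < n)) = Finset.univ := by
    apply Finset.eq_univ_of_card
    refine le_antisymm ?_ ?_
    · simpa using Finset.card_filter_le Finset.univ (fun x => (g x).val < n)
    · simpa using h
  have := hu ▸ Finset.mem_univ x
  exact (Finset.mem_filter.1 this).2

/-- parking functions correspond to `good · 0`. -/
def parkEquiv :
    {f : Fin n → Fin n // IsParkingFunction n f} ≃ {g : Fin n → ZMod (n+1) // good n g 0} where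
  toFun f := ⟨fun x => ((f.1 x : ℕ) : ZMod (n+1)), by
    intro k hk
    rw [good_filter_eq _ k hk]
    have hval : ∀ x : Fin n, (((f.1 x : ℕ) : ZMod (n+1))).val = (f.1 x : ℕ) := fun x =>
      ZMod.val_cast_of_lt (by omega)
    simp_rw [hval]
    exact f.2 k hk⟩
  invFun g := ⟨fun x => ⟨(g.1 x).val, good_zero_val_lt g.2 x⟩, by
    intro k hk
    have h := g.2 k hk
    rw [good_filter_eq _ k hk] at h
    exact h⟩
  left_inv f := by
    ext x
    simp only
    exact ZMod.val_cast_of_lt (by omega)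
  right_inv g := by
    ext x
    simp only
    exact ZMod.natCast_rightInverse (g.1 x)

lemma key_count :
    (n+1) * Nat.card {g : Fin n → ZMod (n+1) // good n g 0} = (n+1)^n := by
  have hbij : Function.Bijective (fun p : ZMod (n+1) × {g : Fin n → ZMod (n+1) // good n g 0} =>
      (fun x => p.2.1 x + p.1 : Fin n → ZMod (n+1))) := by
    constructor
    · rintro ⟨t, g, hg⟩ ⟨s, h, hh⟩ heq
      simp only at heq
      have hg' : good n (fun x => g x + t) (0 + t) := good_shift g 0 t hg
      have hh' : good n (fun x => h x + s) (0 + s) := good_shift h 0 s hh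
      rw [zero_add] at hg' hh'
      rw [heq] at hg'
      obtain ⟨u, -, huniq⟩ := exists_unique_good (fun x => h x + s)
      have hts : t = s := (huniq t hg').trans (huniq s hh').symm
      subst hts
      have hgh : g = h := by
        funext x
        have := congrFun heq x
        exact add_right_cancel this
      simp [hgh]
    · intro u
      obtain ⟨t, htg, -⟩ := exists_unique_good u
      have hg : good n (fun x => u x + (-t)) (t + (-t)) := good_shift u t (-t) htg
      rw [add_neg_cancel] at hg
      refine ⟨⟨t, ⟨fun x => u x + (-t), hg⟩⟩, ?_⟩
      funext x
      simp
  have h1 := Nat.card_eq_of_bijective _ hbij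
  rw [Nat.card_prod, Nat.card_zmod, Nat.card_fun, Nat.card_zmod,
    Nat.card_eq_fintype_card (α := Fin n), Fintype.card_fin] at h1
  exact h1

end ParkAux

/-- The number of parking functions on `{1,…,n}` equals `(n+1)^(n-1)`. -/
theorem stmt_0 (n : ℕ) :
    Nat.card {f : Fin n → Fin n // IsParkingFunction n f} = (n + 1) ^ (n - 1) := by
  have h1 : Nat.card {f : Fin n → Fin n // IsParkingFunction n f}
      = Nat.card {g : Fin n → ZMod (n+1) // ParkAux.good n g 0} :=
    Nat.card_congr ParkAux.parkEquiv
  have hkey := ParkAux.key_count (n := n)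
  have hpow : (n+1)^n = (n+1) * (n+1)^(n-1) := by
    cases n with
    | zero => simp
    | succ m => rw [Nat.succ_sub_one, pow_succ]; ring
  rw [h1]
  exact Nat.eq_of_mul_eq_mul_left (Nat.succ_pos n) (hkey.trans hpow)
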